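/- Let a, b > 0 and consider the Dirichlet Laplacian on the rectangle (0, a) × (0, b), whose eigenvalues are λ_{k,l} = π²(k²/a² + l²/b²) for integers k, l ≥ 1. Then the Dirichlet partition function Z(t) = Σ_{k=1}^∞ Σ_{l=1}^∞ exp(−π²(k²/a² + l²/b²) t) satisfies lim_{t→0⁺} ( Z(t) − ab/(4πt) + (a + b)/(4√(πt)) ) = 1/4; that is, Z(t) ∼ |Ω|/(4πt) − |∂Ω|/(8√(πt)) + 1/4 as t → 0⁺, where |Ω| = ab and |∂Ω| = 2(a + b). -/

import Mathlib

open Real Filter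

/-- Short-time asymptotics of the Dirichlet partition function of the rectangle
`(0,a) × (0,b)`: with eigenvalues `π²(k²/a² + l²/b²)`, `k, l ≥ 1`,
`Z(t) − ab/(4πt) + (a + b)/(4√(πt)) → 1/4` as `t → 0⁺`. -/

lemma summable_aux {A : ℝ} (hA : 0 < A) :
    Summable (fun n : ℕ => Real.exp (-A * ((n : ℝ) + 1) ^ 2)) := by
  have hg : Summable (fun n : ℕ => Real.exp (-A) ^ (n + 1)) := by
    have hr : Real.exp (-A) < 1 := Real.exp_lt_one_iff.mpr (by linarith)
    have := (summable_geometric_of_lt_one (Real.exp_pos _).le hr).mul_left (Real.exp (-A))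
    refine this.congr fun n => ?_
    rw [pow_succ, mul_comm]
  refine Summable.of_nonneg_of_le (fun n => (Real.exp_pos _).le) (fun n => ?_) hg
  rw [← Real.exp_nat_mul]
  apply Real.exp_le_exp.mpr
  push_cast
  nlinarith [mul_nonneg hA.le (mul_nonneg (by positivity : (0:ℝ) ≤ (n:ℝ)+1) (Nat.cast_nonneg (α := ℝ) n))]

lemma tsum_bound {A : ℝ} (hA : 0 < A) (hA2 : Real.exp (-A) ≤ 1/2) :
    (∑' n : ℕ, Real.exp (-A * ((n : ℝ) + 1) ^ 2)) ≤ 2 * Real.exp (-A) := by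
  set r := Real.exp (-A) with hr
  have hr0 : 0 < r := Real.exp_pos _
  have hr1 : r < 1 := by linarith
  have hg : Summable (fun n : ℕ => r ^ (n + 1)) := by
    have := (summable_geometric_of_lt_one hr0.le hr1).mul_left r
    refine this.congr fun n => ?_
    rw [pow_succ, mul_comm]
  have h1 : (∑' n : ℕ, Real.exp (-A * ((n : ℝ) + 1) ^ 2)) ≤ ∑' n : ℕ, r ^ (n + 1) := by
    refine Summable.tsum_le_tsum (fun n => ?_) (summable_aux hA) hg
    rw [hr, ← Real.exp_nat_mul]
    apply Real.exp_le_exp.mpr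
    push_cast
    nlinarith [mul_nonneg hA.le (mul_nonneg (by positivity : (0:ℝ) ≤ (n:ℝ)+1) (Nat.cast_nonneg (α := ℝ) n))]
  have h2 : (∑' n : ℕ, r ^ (n + 1)) = r * (1 - r)⁻¹ := by
    rw [show (fun n : ℕ => r ^ (n + 1)) = fun n : ℕ => r * r ^ n by
      funext n; rw [pow_succ, mul_comm], tsum_mul_left, tsum_geometric_of_lt_one hr0.le hr1]
  have h3 : r * (1 - r)⁻¹ ≤ 2 * r := by
    rw [mul_inv_le_iff₀ (by linarith)]
    nlinarith
  linarith

lemma theta_split {A : ℝ} (hA : 0 < A) :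
    (∑' n : ℤ, Real.exp (-A * (n : ℝ) ^ 2)) =
      2 * (∑' n : ℕ, Real.exp (-A * ((n : ℝ) + 1) ^ 2)) + 1 := by
  have hs : Summable (fun n : ℕ => Real.exp (-A * ((n : ℝ) + 1) ^ 2)) := summable_aux hA
  have h1 : Summable (fun n : ℕ => Real.exp (-A * (((n : ℕ) : ℤ) + 1 : ℝ) ^ 2)) := by
    refine hs.congr fun n => by norm_num
  have h2 : Summable (fun n : ℕ => Real.exp (-A * ((-(((n : ℕ) : ℤ) + 1) : ℤ) : ℝ) ^ 2)) := by
    refine hs.congr fun n => by push_cast; ring_nf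
  have key := tsum_of_add_one_of_neg_add_one (f := fun n : ℤ => Real.exp (-A * (n : ℝ) ^ 2))
    (by exact_mod_cast h1) (by exact_mod_cast h2)
  have e1 : (∑' n : ℕ, Real.exp (-A * ((((n : ℕ) : ℤ) + 1 : ℤ) : ℝ) ^ 2))
      = ∑' n : ℕ, Real.exp (-A * ((n : ℝ) + 1) ^ 2) := by
    refine tsum_congr fun n => by push_cast; ring_nf
  have e2 : (∑' n : ℕ, Real.exp (-A * ((-(((n : ℕ) : ℤ) + 1) : ℤ) : ℝ) ^ 2))
      = ∑' n : ℕ, Real.exp (-A * ((n : ℝ) + 1) ^ 2) := by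
    refine tsum_congr fun n => by push_cast; ring_nf
  rw [key, e1, e2]
  norm_num
  ring

lemma theta_identity (c t : ℝ) (hc : 0 < c) (ht : 0 < t) :
    (∑' k : ℕ, Real.exp (-(Real.pi ^ 2 * (((k : ℝ) + 1) ^ 2 / c ^ 2)) * t))
      = c / (2 * Real.sqrt (Real.pi * t)) - 1 / 2
        + (c / Real.sqrt (Real.pi * t)) * ∑' n : ℕ, Real.exp (-(c ^ 2 / t) * ((n : ℝ) + 1) ^ 2) := by
  have hπ := Real.pi_pos
  set α : ℝ := Real.pi * t / c ^ 2 with hα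
  have hα0 : 0 < α := by positivity
  have key := Real.tsum_exp_neg_mul_int_sq hα0
  have hL : (∑' n : ℤ, Real.exp (-Real.pi * α * (n : ℝ) ^ 2))
      = ∑' n : ℤ, Real.exp (-(Real.pi ^ 2 * t / c ^ 2) * (n : ℝ) ^ 2) := by
    refine tsum_congr fun n => by rw [hα]; ring_nf
  have hR : (∑' n : ℤ, Real.exp (-Real.pi / α * (n : ℝ) ^ 2))
      = ∑' n : ℤ, Real.exp (-(c ^ 2 / t) * (n : ℝ) ^ 2) := by
    refine tsum_congr fun n => ?_
    congr 1
    rw [hα]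
    field_simp
  have hA1 : (0:ℝ) < Real.pi ^ 2 * t / c ^ 2 := by positivity
  have hA2 : (0:ℝ) < c ^ 2 / t := by positivity
  rw [hL, hR, theta_split hA1, theta_split hA2] at key
  have hαpow : α ^ ((1:ℝ)/2) = Real.sqrt (Real.pi * t) / c := by
    rw [← Real.sqrt_eq_rpow, hα, Real.sqrt_div (by positivity), Real.sqrt_sq hc.le]
  rw [hαpow] at key
  have hS : (∑' k : ℕ, Real.exp (-(Real.pi ^ 2 * (((k : ℝ) + 1) ^ 2 / c ^ 2)) * t))
      = ∑' k : ℕ, Real.exp (-(Real.pi ^ 2 * t / c ^ 2) * ((k : ℝ) + 1) ^ 2) := by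
    refine tsum_congr fun k => by ring_nf
  rw [hS]
  set S := ∑' k : ℕ, Real.exp (-(Real.pi ^ 2 * t / c ^ 2) * ((k : ℝ) + 1) ^ 2)
  set E := ∑' n : ℕ, Real.exp (-(c ^ 2 / t) * ((n : ℝ) + 1) ^ 2)
  have hs0 : 0 < Real.sqrt (Real.pi * t) := Real.sqrt_pos.mpr (by positivity)
  rw [one_div_div] at key
  have key' : S = ((c / Real.sqrt (Real.pi * t)) * (2 * E + 1) - 1) / 2 := by linarith
  rw [key']; ring

noncomputable def Ec (c t : ℝ) : ℝ := ∑' n : ℕ, Real.exp (-(c ^ 2 / t) * ((n : ℝ) + 1) ^ 2)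

lemma Ec_nonneg (c t : ℝ) : 0 ≤ Ec c t :=
  tsum_nonneg fun n => (Real.exp_pos _).le

lemma Ec_le {c t : ℝ} (hc : 0 < c) (ht : 0 < t) (htc : t ≤ c ^ 2) :
    Ec c t ≤ 2 * Real.exp (-(c ^ 2 / t)) := by
  have hA : 0 < c ^ 2 / t := by positivity
  refine tsum_bound hA ?_
  have h1 : (1:ℝ) ≤ c ^ 2 / t := (one_le_div ht).mpr htc
  have h2 : Real.exp (-(c ^ 2 / t)) ≤ Real.exp (-1) := Real.exp_le_exp.mpr (by linarith)
  have h3 : Real.exp (-1) ≤ 1 / 2 := by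
    rw [Real.exp_neg]
    rw [inv_le_comm₀ (Real.exp_pos 1) (by norm_num)]
    have := Real.add_one_le_exp 1
    linarith
  linarith

lemma decay {c : ℝ} (hc : 0 < c) :
    Tendsto (fun t : ℝ => (1 / t) * Real.exp (-(c ^ 2 / t))) (nhdsWithin 0 (Set.Ioi 0)) (nhds 0) := by
  have h1 : Tendsto (fun x : ℝ => x * Real.exp (-x)) atTop (nhds 0) := by
    simpa using tendsto_pow_mul_exp_neg_atTop_nhds_zero 1
  have h2 : Tendsto (fun t : ℝ => c ^ 2 / t) (nhdsWithin 0 (Set.Ioi 0)) atTop := by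
    have := tendsto_inv_nhdsGT_zero (𝕜 := ℝ)
    have h3 := this.const_mul_atTop (show (0:ℝ) < c ^ 2 by positivity)
    refine h3.congr fun t => by rw [div_eq_mul_inv]
  have h4 := h1.comp h2
  have h5 := h4.const_mul (1 / c ^ 2)
  rw [mul_zero] at h5
  refine h5.congr fun t => ?_
  simp only [Function.comp]
  field_simp

lemma T_tendsto {c : ℝ} (hc : 0 < c) :
    Tendsto (fun t : ℝ => c / (Real.pi * t) * Ec c t) (nhdsWithin 0 (Set.Ioi 0)) (nhds 0) := by
  have hπ := Real.pi_pos
  have hmem : Set.Ioc (0:ℝ) (c ^ 2) ∈ nhdsWithin (0:ℝ) (Set.Ioi 0) :=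
    Ioc_mem_nhdsGT_of_mem (by constructor <;> [rfl; positivity])
  refine squeeze_zero' ?_ ?_ (g := fun t => (2 * c / Real.pi) * ((1 / t) * Real.exp (-(c ^ 2 / t)))) ?_
  · filter_upwards [hmem] with t ht
    exact mul_nonneg (div_pos hc (mul_pos hπ ht.1)).le (Ec_nonneg c t)
  · filter_upwards [hmem] with t ht
    have h1 := Ec_le hc ht.1 ht.2
    have h2 : 0 < c / (Real.pi * t) := div_pos hc (mul_pos hπ ht.1)
    calc c / (Real.pi * t) * Ec c t ≤ c / (Real.pi * t) * (2 * Real.exp (-(c ^ 2 / t))) :=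
          mul_le_mul_of_nonneg_left h1 h2.le
      _ = (2 * c / Real.pi) * ((1 / t) * Real.exp (-(c ^ 2 / t))) := by
          field_simp
  · have := (decay hc).const_mul (2 * c / Real.pi)
    simpa using this

lemma R_tendsto {c : ℝ} (hc : 0 < c) :
    Tendsto (fun t : ℝ => c / Real.sqrt (Real.pi * t) * Ec c t)
      (nhdsWithin 0 (Set.Ioi 0)) (nhds 0) := by
  have hπ := Real.pi_pos
  have hsq : Tendsto (fun t : ℝ => Real.sqrt (Real.pi * t)) (nhdsWithin 0 (Set.Ioi 0)) (nhds 0) := by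
    have hcont : Continuous fun t : ℝ => Real.sqrt (Real.pi * t) := by fun_prop
    have h := hcont.tendsto 0
    simp only [mul_zero, Real.sqrt_zero] at h
    exact h.mono_left nhdsWithin_le_nhds
  have h := hsq.mul (T_tendsto hc)
  rw [mul_zero] at h
  refine Tendsto.congr' ?_ h
  filter_upwards [self_mem_nhdsWithin] with t (ht : 0 < t)
  have hs0 : 0 < Real.sqrt (Real.pi * t) := Real.sqrt_pos.mpr (by positivity)
  have hs2 : Real.sqrt (Real.pi * t) ^ 2 = Real.pi * t := Real.sq_sqrt (by positivity)
  rw [← hs2]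
  field_simp
  rw [Real.sqrt_sq hs0.le]

lemma Z_factor (a b t : ℝ) :
    (∑' k : ℕ, ∑' l : ℕ,
        Real.exp (-(Real.pi ^ 2 * (((k : ℝ) + 1) ^ 2 / a ^ 2 + ((l : ℝ) + 1) ^ 2 / b ^ 2)) * t))
      = (∑' k : ℕ, Real.exp (-(Real.pi ^ 2 * (((k : ℝ) + 1) ^ 2 / a ^ 2)) * t)) *
        ∑' l : ℕ, Real.exp (-(Real.pi ^ 2 * (((l : ℝ) + 1) ^ 2 / b ^ 2)) * t) := by
  rw [← tsum_mul_right]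
  refine tsum_congr fun k => ?_
  rw [← tsum_mul_left]
  refine tsum_congr fun l => ?_
  rw [← Real.exp_add]
  congr 1
  ring


theorem dirichlet_partition_rectangle_short_time (a b : ℝ) (ha : 0 < a) (hb : 0 < b) :
    Tendsto
      (fun t : ℝ =>
        (∑' k : ℕ, ∑' l : ℕ,
            Real.exp (-(Real.pi ^ 2 *
              (((k : ℝ) + 1) ^ 2 / a ^ 2 + ((l : ℝ) + 1) ^ 2 / b ^ 2)) * t)) -
          a * b / (4 * Real.pi * t) + (a + b) / (4 * Real.sqrt (Real.pi * t)))
      (nhdsWithin 0 (Set.Ioi 0)) (nhds (1 / 4)) := by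
  have hπ := Real.pi_pos
  set g : ℝ → ℝ := fun t =>
    1 / 4 + (a / 2) * (b / (Real.pi * t) * Ec b t) - (b / Real.sqrt (Real.pi * t) * Ec b t) / 2
      + (b / 2) * (a / (Real.pi * t) * Ec a t) - (a / Real.sqrt (Real.pi * t) * Ec a t) / 2
      + (a / Real.sqrt (Real.pi * t) * Ec a t) * (b / Real.sqrt (Real.pi * t) * Ec b t)
    with hg
  have hgt : Tendsto g (nhdsWithin 0 (Set.Ioi 0)) (nhds (1 / 4)) := by
    have Ta := T_tendsto ha
    have Tb := T_tendsto hb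
    have Ra := R_tendsto ha
    have Rb := R_tendsto hb
    have comb := (((((tendsto_const_nhds (x := (1/4 : ℝ))
        (f := nhdsWithin (0:ℝ) (Set.Ioi 0))).add
        (Tb.const_mul (a / 2))).sub (Rb.div_const 2)).add
        (Ta.const_mul (b / 2))).sub (Ra.div_const 2)).add (Ra.mul Rb)
    norm_num at comb
    exact comb
  refine Tendsto.congr' ?_ hgt
  filter_upwards [self_mem_nhdsWithin] with t (ht : 0 < t)
  have hθa := theta_identity a t ha ht
  have hθb := theta_identity b t hb ht
  rw [show (∑' n : ℕ, Real.exp (-(a ^ 2 / t) * ((n : ℝ) + 1) ^ 2)) = Ec a t from rfl] at hθa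
  rw [show (∑' n : ℕ, Real.exp (-(b ^ 2 / t) * ((n : ℝ) + 1) ^ 2)) = Ec b t from rfl] at hθb
  simp only [hg]
  rw [Z_factor, hθa, hθb]
  have hs0 : 0 < Real.sqrt (Real.pi * t) := Real.sqrt_pos.mpr (by positivity)
  have hs2 : Real.sqrt (Real.pi * t) ^ 2 = Real.pi * t := Real.sq_sqrt (by positivity)
  set s := Real.sqrt (Real.pi * t)
  rw [show (4:ℝ) * Real.pi * t = 4 * (Real.pi * t) from by ring]
  rw [← hs2]
  set Ea := Ec a t
  set Eb := Ec b t
  field_simp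
  ring
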